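/- Asynchronous coordinate-update contraction: let m : ℝᴺ → ℝᴺ satisfy ‖m(x) − m(y)‖_∞ ≤ γ‖x − y‖_∞ with γ < 1 (∞-norm contraction), and let the asynchronous iteration update an arbitrary nonempty subset S_t ⊆ {1,…,N} of coordinates at each step: x_{t+1,i} = m(x_t)_i for i ∈ S_t and x_{t+1,i} = x_{t,i} otherwise. If every coordinate is updated infinitely often, then x_t converges to the unique fixed point x⋆ of m. -/

import Mathlib

open Filter

/-- Asynchronous coordinate-update convergence: if `m` is a `γ`-contraction in the `∞`-norm
(`γ < 1`), and at each step an arbitrary nonempty subset of coordinates is updated, with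
every coordinate updated infinitely often, then the asynchronous iterates converge to the
unique fixed point of `m`. -/
theorem stmt_19 (N : ℕ) (m : (Fin N → ℝ) → (Fin N → ℝ))
    (γ : ℝ) (hγ : γ < 1)
    (hm : ∀ x y, ‖m x - m y‖ ≤ γ * ‖x - y‖)
    (S : ℕ → Set (Fin N)) (hSne : ∀ t, (S t).Nonempty)
    (x : ℕ → Fin N → ℝ)
    (hx : ∀ t i, i ∈ S t → x (t + 1) i = m (x t) i)
    (hx' : ∀ t i, i ∉ S t → x (t + 1) i = x t i)
    (hfair : ∀ i : Fin N, ∀ T : ℕ, ∃ t ≥ T, i ∈ S t) :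
    ∃ xs, m xs = xs ∧ (∀ y, m y = y → y = xs) ∧
      Tendsto x atTop (nhds xs) := by
  set γ' : ℝ := max γ 0 with hγ'def
  have hγ'0 : 0 ≤ γ' := le_max_right _ _
  have hγ'1 : γ' < 1 := max_lt hγ one_pos
  have hm' : ∀ a b, ‖m a - m b‖ ≤ γ' * ‖a - b‖ := fun a b =>
    (hm a b).trans (mul_le_mul_of_nonneg_right (le_max_left _ _) (norm_nonneg _))
  have hC : ContractingWith ⟨γ', hγ'0⟩ m := by
    refine ⟨by exact_mod_cast hγ'1, LipschitzWith.of_dist_le_mul fun a b => ?_⟩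
    rw [dist_eq_norm, dist_eq_norm]; exact hm' a b
  obtain ⟨xs, hfix⟩ : ∃ xs, m xs = xs :=
    ⟨ContractingWith.fixedPoint m hC, hC.fixedPoint_isFixedPt⟩
  refine ⟨xs, hfix, ?_, ?_⟩
  · intro y hy
    by_contra hne
    have h1 : ‖y - xs‖ ≤ γ' * ‖y - xs‖ := by
      calc ‖y - xs‖ = ‖m y - m xs‖ := by rw [hy, hfix]
        _ ≤ γ' * ‖y - xs‖ := hm' y xs
    have h2 : 0 < ‖y - xs‖ := by
      rw [norm_pos_iff]; exact sub_ne_zero.mpr hne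
    nlinarith
  · set e : ℕ → ℝ := fun t => ‖x t - xs‖ with he
    have hcoord : ∀ t i, i ∈ S t → |x (t + 1) i - xs i| ≤ γ' * e t := by
      intro t i h
      have h1 : |x (t + 1) i - xs i| = ‖(m (x t) - m xs) i‖ := by
        rw [hx t i h, hfix]; simp [Real.norm_eq_abs]
      rw [h1]
      exact (norm_le_pi_norm _ i).trans (hm' _ _)
    have hmono : ∀ t, e (t + 1) ≤ e t := by
      intro t
      have h0 : 0 ≤ e t := norm_nonneg _
      refine (pi_norm_le_iff_of_nonneg h0).2 fun i => ?_
      by_cases h : i ∈ S t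
      · calc ‖(x (t + 1) - xs) i‖ = |x (t + 1) i - xs i| := by simp [Real.norm_eq_abs]
          _ ≤ γ' * e t := hcoord t i h
          _ ≤ 1 * e t := mul_le_mul_of_nonneg_right hγ'1.le h0
          _ = e t := one_mul _
      · calc ‖(x (t + 1) - xs) i‖ = ‖(x t - xs) i‖ := by simp [hx' t i h]
          _ ≤ e t := norm_le_pi_norm _ i
    have hanti : ∀ s t : ℕ, s ≤ t → e t ≤ e s := fun s t h =>
      antitone_nat_of_succ_le hmono h
    have hstay : ∀ s i, i ∈ S s → ∀ t, s + 1 ≤ t → |x t i - xs i| ≤ γ' * e s := by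
      intro s i hi t ht
      induction t, ht using Nat.le_induction with
      | base => exact hcoord s i hi
      | succ t ht ih =>
        by_cases h : i ∈ S t
        · exact (hcoord t i h).trans (mul_le_mul_of_nonneg_left (hanti s t (by omega)) hγ'0)
        · rw [hx' t i h]; exact ih
    have hshrink : ∀ T, ∃ T', T ≤ T' ∧ e T' ≤ γ' * e T := by
      intro T
      choose s hs1 hs2 using fun i => hfair i T
      refine ⟨max T (Finset.univ.sup s + 1), le_max_left _ _, ?_⟩
      refine (pi_norm_le_iff_of_nonneg (mul_nonneg hγ'0 (norm_nonneg _))).2 fun i => ?_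
      have hsup : s i ≤ Finset.univ.sup s := Finset.le_sup (Finset.mem_univ i)
      have hlt : s i + 1 ≤ max T (Finset.univ.sup s + 1) :=
        le_trans (by omega) (le_max_right _ _)
      calc ‖(x (max T (Finset.univ.sup s + 1)) - xs) i‖
          = |x (max T (Finset.univ.sup s + 1)) i - xs i| := by simp [Real.norm_eq_abs]
        _ ≤ γ' * e (s i) := hstay (s i) i (hs2 i) _ hlt
        _ ≤ γ' * e T := mul_le_mul_of_nonneg_left (hanti T (s i) (hs1 i)) hγ'0
    have hgeo : ∀ k : ℕ, ∃ T, e T ≤ γ' ^ k * e 0 := by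
      intro k
      induction k with
      | zero => exact ⟨0, by simp⟩
      | succ k ih =>
        obtain ⟨T, hT⟩ := ih
        obtain ⟨T', _, hT'⟩ := hshrink T
        refine ⟨T', hT'.trans ?_⟩
        calc γ' * e T ≤ γ' * (γ' ^ k * e 0) := mul_le_mul_of_nonneg_left hT hγ'0
          _ = γ' ^ (k + 1) * e 0 := by ring
    rw [Metric.tendsto_atTop]
    intro ε hε
    have htend : Tendsto (fun k => γ' ^ k * e 0) atTop (nhds 0) := by
      simpa using (tendsto_pow_atTop_nhds_zero_of_lt_one hγ'0 hγ'1).mul_const (e 0)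
    obtain ⟨k, hk⟩ := (htend.eventually (gt_mem_nhds hε)).exists
    obtain ⟨T, hT⟩ := hgeo k
    refine ⟨T, fun t ht => ?_⟩
    rw [dist_eq_norm]
    exact lt_of_le_of_lt ((hanti T t ht).trans hT) hk
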